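/- Let G be a group, H a subgroup of G, and T a subgroup of H such that for every g ∈ G with g⁻¹Tg ⊆ H there exists h ∈ H with g⁻¹Tg = h⁻¹Th. Then the map sending n ∈ N_G(T) to the coset nH induces a well-defined bijection from the coset space N_G(T)/(N_G(T) ∩ H) onto the set of fixed points of the left-translation action of T on G/H; here N_G(T) ∩ H = N_H(T) is the normalizer of T in H. -/

import Mathlib

/-- Under the conjugacy property of maximal tori, the map `n ↦ nH` induces a
well-defined bijection from `N_G(T)/(N_G(T) ∩ H)` onto the fixed-point set of the
left-translation action of `T` on `G/H`.  Here `N_G(T) ∩ H = N_H(T)`. -/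
theorem normalizer_quotient_bijection_fixed_points {G : Type*} [Group G]
    (H T : Subgroup G) (hTH : T ≤ H)
    (hconj : ∀ g : G, (∀ t ∈ T, g⁻¹ * t * g ∈ H) →
      ∃ h ∈ H, (fun t => g⁻¹ * t * g) '' (T : Set G) = (fun t => h⁻¹ * t * h) '' (T : Set G)) :
    ∃ φ : (Subgroup.normalizer (T : Set G)) ⧸ H.subgroupOf (Subgroup.normalizer (T : Set G)) → G ⧸ H,
      (∀ n : (Subgroup.normalizer (T : Set G)), φ (QuotientGroup.mk n) = QuotientGroup.mk (n : G)) ∧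
      Function.Injective φ ∧
      Set.range φ = {x : G ⧸ H | ∀ t ∈ T, (t : G) • x = x} := by
  refine ⟨fun x => Quotient.liftOn' x (fun n => QuotientGroup.mk (n : G)) ?_, fun n => rfl,
    ?_, ?_⟩
  · intro a b hab
    rw [QuotientGroup.leftRel_apply, Subgroup.mem_subgroupOf] at hab
    exact QuotientGroup.eq.mpr hab
  · intro x y
    induction x using Quotient.inductionOn' with
    | h a =>
    induction y using Quotient.inductionOn' with
    | h b =>
    intro hab
    have h1 : (a : G)⁻¹ * b ∈ H := QuotientGroup.eq.mp hab
    exact Quotient.sound' (QuotientGroup.leftRel_apply.mpr (Subgroup.mem_subgroupOf.mpr h1))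
  · ext x
    constructor
    · rintro ⟨q, rfl⟩
      induction q using Quotient.inductionOn' with
      | h n =>
      intro t ht
      show (t : G) • QuotientGroup.mk (n : G) = QuotientGroup.mk (n : G)
      have hmem : (n : G)⁻¹ * t⁻¹ * n ∈ T := by
        have h2 : (n : G)⁻¹ ∈ Subgroup.normalizer (T : Set G) := inv_mem n.2
        rw [Subgroup.mem_normalizer_iff] at h2
        simpa using (h2 t⁻¹).mp (inv_mem ht)
      rw [MulAction.Quotient.smul_mk, smul_eq_mul]
      refine QuotientGroup.eq.mpr ?_
      have heq : ((t : G) * n)⁻¹ * n = (n : G)⁻¹ * t⁻¹ * n := by group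
      rw [heq]
      exact hTH hmem
    · intro hx
      obtain ⟨g, rfl⟩ := QuotientGroup.mk_surjective x
      have hsub : ∀ t ∈ T, g⁻¹ * t * g ∈ H := by
        intro t ht
        have := hx t⁻¹ (inv_mem ht)
        rw [MulAction.Quotient.smul_mk, smul_eq_mul] at this
        have h3 : (t⁻¹ * g)⁻¹ * g ∈ H := QuotientGroup.eq.mp this
        have heq : (t⁻¹ * g)⁻¹ * g = g⁻¹ * t * g := by group
        rwa [heq] at h3
      obtain ⟨h, hhH, hset⟩ := hconj g hsub
      set n : G := g * h⁻¹ with hn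
      have hnmem : n ∈ Subgroup.normalizer (T : Set G) := by
        rw [Subgroup.mem_normalizer_iff]
        intro s
        constructor
        · intro hs
          -- h⁻¹ s h ∈ RHS image = LHS image
          have : h⁻¹ * s * h ∈ (fun t => g⁻¹ * t * g) '' (T : Set G) := by
            rw [hset]; exact ⟨s, hs, rfl⟩
          obtain ⟨t, htT, hteq⟩ := this
          simp only at hteq
          have hs2 : s = h * (g⁻¹ * t * g) * h⁻¹ := by rw [hteq]; group
          have hfin : n * s * n⁻¹ = t := by rw [hn, hs2]; group
          rw [hfin]; exact htT
        · intro hs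
          have hmem2 : g⁻¹ * (n * s * n⁻¹) * g ∈ (fun t => h⁻¹ * t * h) '' (T : Set G) := by
            rw [← hset]; exact ⟨n * s * n⁻¹, hs, rfl⟩
          obtain ⟨v, hvT, hveq⟩ := hmem2
          simp only at hveq
          have : s = v := by
            have h1 : g⁻¹ * (n * s * n⁻¹) * g = h⁻¹ * s * h := by rw [hn]; group
            rw [h1] at hveq
            calc s = h * (h⁻¹ * s * h) * h⁻¹ := by group
              _ = h * (h⁻¹ * v * h) * h⁻¹ := by rw [hveq]
              _ = v := by group
          rw [this]; exact hvT
      refine ⟨QuotientGroup.mk ⟨n, hnmem⟩, ?_⟩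
      show QuotientGroup.mk n = QuotientGroup.mk g
      refine QuotientGroup.eq.mpr ?_
      have : n⁻¹ * g = h := by rw [hn]; group
      rw [this]; exact hhH
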